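/- arXiv:2101.09068 — 8 statements merged into one kernel-verified Lean document; each statement's English description precedes it below -/
import Mathlib

section
/- Let E be a smooth Banach space and define V : E × E* → ℝ by V(x, x*) = ‖x‖² − 2⟨x, x*⟩ + ‖x*‖². Then for all x ∈ E and x*, y* ∈ E*, V(x, x*) + 2⟨J⁻¹x* − x, y*⟩ ≤ V(x, x* + y*). -/
open NormedSpace

/-- In a reflexive, strictly convex, smooth Banach space with duality mapping `J`
(bijective with inverse `J⁻¹`), the functional `V(x, x*) = ‖x‖² − 2⟨x, x*⟩ + ‖x*‖²`
satisfies `V(x, x*) + 2⟨J⁻¹x* − x, y*⟩ ≤ V(x, x* + y*)` for all `x ∈ E`, `x*, y* ∈ E*`. -/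
theorem V_inequality
    {E : Type*} [NormedAddCommGroup E] [NormedSpace ℝ E] [CompleteSpace E]
    (J : E → StrongDual ℝ E) (Jinv : StrongDual ℝ E → E)
    (hJ : ∀ u, J u u = ‖u‖ ^ 2) (hJnorm : ∀ u, ‖J u‖ = ‖u‖)
    (hJinv : ∀ f, J (Jinv f) = f) (hinvJ : ∀ u, Jinv (J u) = u)
    (V : E → StrongDual ℝ E → ℝ) (hV : ∀ u f, V u f = ‖u‖ ^ 2 - 2 * f u + ‖f‖ ^ 2)
    (x : E) (xs ys : StrongDual ℝ E) :
    V x xs + 2 * ys (Jinv xs - x) ≤ V x (xs + ys) := by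
  set u := Jinv xs with hu
  have hxu : xs u = ‖u‖ ^ 2 := by rw [← hJinv xs]; exact hJ u
  have hnorm : ‖xs‖ = ‖u‖ := by rw [← hJinv xs]; exact hJnorm u
  have hle : (xs + ys) u ≤ ‖xs + ys‖ * ‖u‖ := by
    calc (xs + ys) u ≤ ‖(xs + ys) u‖ := le_abs_self _
    _ ≤ ‖xs + ys‖ * ‖u‖ := (xs + ys).le_opNorm u
  have hadd : (xs + ys) u = xs u + ys u := rfl
  simp only [hV, map_sub, hnorm]
  have haddx : (xs + ys) x = xs x + ys x := rfl
  rw [hadd, hxu] at hle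
  nlinarith [sq_nonneg (‖xs + ys‖ - ‖u‖)]
end

section
/- A Banach space E is 2-uniformly smooth if and only if there exists a constant κ > 0 such that for all x, y ∈ E, ‖x + y‖² ≤ ‖x‖² + 2⟨y, Jx⟩ + 2κ²‖y‖², where J is the normalized duality mapping. -/
open NormedSpace

/-- The modulus of smoothness of a normed space. -/
noncomputable def modSmooth (F : Type*) [NormedAddCommGroup F] (t : ℝ) : ℝ :=
  sSup {r : ℝ | ∃ x y : F, ‖x‖ = 1 ∧ ‖y‖ ≤ t ∧ r = (‖x + y‖ + ‖x - y‖) / 2 - 1}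

lemma modSmooth_ge {E : Type*} [NormedAddCommGroup E] {t : ℝ}
    {x y : E} (hx : ‖x‖ = 1) (hy : ‖y‖ ≤ t) :
    (‖x + y‖ + ‖x - y‖) / 2 - 1 ≤ modSmooth E t := by
  apply le_csSup
  · refine ⟨t, ?_⟩
    rintro r ⟨u, v, hu, hv, rfl⟩
    have h1 := norm_add_le u v
    have h2 := norm_sub_le u v
    rw [hu] at h1 h2
    linarith
  · exact ⟨x, y, hx, hy, rfl⟩

lemma unit_ineq_aux {E : Type*} [NormedAddCommGroup E] [NormedSpace ℝ E]
    {c : ℝ} (hc : 0 < c) (hmod : ∀ t : ℝ, 0 ≤ t → modSmooth E t ≤ c * t ^ 2)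
    {x : E} (hx : ‖x‖ = 1) (y : E) (j : StrongDual ℝ E) (hj : ‖j‖ = 1) (hjx : j x = 1) :
    ‖x + y‖ ^ 2 ≤ 1 + 2 * j y + (6 + 8 * c + 4 * c ^ 2) * ‖y‖ ^ 2 := by
  have hjy : |j y| ≤ ‖y‖ := by
    calc |j y| = ‖j y‖ := rfl
    _ ≤ ‖j‖ * ‖y‖ := j.le_opNorm y
    _ = ‖y‖ := by rw [hj, one_mul]
  have ha := abs_le.mp hjy
  have hy0 : (0:ℝ) ≤ ‖y‖ := norm_nonneg y
  by_cases hs : ‖y‖ ≤ 1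
  · have hm := modSmooth_ge hx (le_refl ‖y‖)
    have hm2 := hmod ‖y‖ hy0
    have h1 : ‖x + y‖ + ‖x - y‖ ≤ 2 + 2 * c * ‖y‖ ^ 2 := by nlinarith
    have h2 : 1 - j y ≤ ‖x - y‖ := by
      have h : j (x - y) ≤ ‖x - y‖ := by
        calc j (x - y) ≤ |j (x - y)| := le_abs_self _
        _ ≤ ‖j‖ * ‖x - y‖ := j.le_opNorm _
        _ = ‖x - y‖ := by rw [hj, one_mul]
      rw [map_sub, hjx] at h
      linarith
    have h3 : ‖x + y‖ ≤ 1 + j y + 2 * c * ‖y‖ ^ 2 := by linarith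
    have h4 : (0:ℝ) ≤ ‖x + y‖ := norm_nonneg _
    have h5 : ‖x + y‖ ^ 2 ≤ (1 + j y + 2 * c * ‖y‖ ^ 2) ^ 2 := by nlinarith
    have hA : (j y) ^ 2 ≤ ‖y‖ ^ 2 := sq_le_sq' ha.1 ha.2
    have hs2 : ‖y‖ ^ 2 ≤ 1 := by nlinarith
    nlinarith [mul_nonneg (mul_nonneg hc.le (sq_nonneg ‖y‖)) (sub_nonneg.mpr hs),
      mul_nonneg (mul_nonneg hc.le (sq_nonneg ‖y‖)) (sub_nonneg.mpr ha.2),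
      mul_nonneg (mul_nonneg (mul_nonneg hc.le hc.le) (sq_nonneg ‖y‖))
        (sub_nonneg.mpr hs2)]
  · push_neg at hs
    have h1 : ‖x + y‖ ≤ 1 + ‖y‖ := by
      calc ‖x + y‖ ≤ ‖x‖ + ‖y‖ := norm_add_le x y
      _ = 1 + ‖y‖ := by rw [hx]
    nlinarith [norm_nonneg (x + y), hc.le, sq_nonneg ‖y‖]

/-- A Banach space `E` is 2-uniformly smooth iff there is `κ > 0` with
`‖x + y‖² ≤ ‖x‖² + 2⟨y, jx⟩ + 2κ²‖y‖²` for all `x, y` and some selection `jx` of the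
normalized duality mapping at `x`. -/
theorem two_uniformly_smooth_iff
    {E : Type*} [NormedAddCommGroup E] [NormedSpace ℝ E] [CompleteSpace E] :
    (∃ c > 0, ∀ t : ℝ, 0 ≤ t → modSmooth E t ≤ c * t ^ 2) ↔
      (∃ κ > 0, ∀ x y : E, ∃ jx : StrongDual ℝ E, jx x = ‖x‖ ^ 2 ∧ ‖jx‖ = ‖x‖ ∧
        ‖x + y‖ ^ 2 ≤ ‖x‖ ^ 2 + 2 * jx y + 2 * κ ^ 2 * ‖y‖ ^ 2) := by
  constructor
  · rintro ⟨c, hc, hmod⟩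
    set K : ℝ := 6 + 8 * c + 4 * c ^ 2 with hK
    have hKpos : 0 < K / 2 := by positivity
    refine ⟨Real.sqrt (K / 2), Real.sqrt_pos.mpr hKpos, ?_⟩
    have hKs : 2 * Real.sqrt (K / 2) ^ 2 = K := by
      rw [Real.sq_sqrt hKpos.le]; ring
    intro x y
    by_cases hx : x = 0
    · refine ⟨0, by simp [hx], by simp [hx], ?_⟩
      rw [hKs]
      simp only [hx, zero_add, norm_zero, ContinuousLinearMap.zero_apply]
      nlinarith [sq_nonneg ‖y‖, sq_nonneg c]
    · obtain ⟨g, hg1, hg2⟩ := exists_dual_vector ℝ x (norm_ne_zero_iff.mpr hx)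
      have hn0 : 0 < ‖x‖ := norm_pos_iff.mpr hx
      have hg2' : g x = ‖x‖ := by exact_mod_cast hg2
      refine ⟨‖x‖ • g, ?_, ?_, ?_⟩
      · simp only [ContinuousLinearMap.smul_apply, hg2', smul_eq_mul]; ring
      · rw [norm_smul, hg1, Real.norm_of_nonneg hn0.le, mul_one]
      · have hxh : ‖‖x‖⁻¹ • x‖ = 1 := by
          rw [norm_smul, Real.norm_of_nonneg (inv_nonneg.mpr hn0.le),
            inv_mul_cancel₀ hn0.ne']
        have hgx : g (‖x‖⁻¹ • x) = 1 := by
          rw [map_smul, hg2', smul_eq_mul, inv_mul_cancel₀ hn0.ne']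
        have key := unit_ineq_aux hc hmod hxh (‖x‖⁻¹ • y) g hg1 hgx
        rw [← smul_add, norm_smul, norm_smul, map_smul, smul_eq_mul,
          Real.norm_of_nonneg (inv_nonneg.mpr hn0.le)] at key
        rw [hKs]
        simp only [ContinuousLinearMap.smul_apply, smul_eq_mul]
        calc ‖x + y‖ ^ 2 = ‖x‖ ^ 2 * (‖x‖⁻¹ * ‖x + y‖) ^ 2 := by
              field_simp
          _ ≤ ‖x‖ ^ 2 * (1 + 2 * (‖x‖⁻¹ * g y) +
                (6 + 8 * c + 4 * c ^ 2) * (‖x‖⁻¹ * ‖y‖) ^ 2) :=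
              mul_le_mul_of_nonneg_left key (sq_nonneg ‖x‖)
          _ = ‖x‖ ^ 2 + 2 * (‖x‖ * g y) + K * ‖y‖ ^ 2 := by
              rw [hK]; field_simp
  · rintro ⟨κ, hκ, hineq⟩
    refine ⟨2 * κ ^ 2, by positivity, ?_⟩
    intro t ht
    apply Real.sSup_le _ (by positivity)
    rintro r ⟨x, y, hx, hy, rfl⟩
    obtain ⟨j, hj1, hj2, hj3⟩ := hineq (x + y) ((-2 : ℝ) • y)
    have e1 : (x + y) + (-2 : ℝ) • y = x - y := by module
    have e2 : ‖(-2 : ℝ) • y‖ = 2 * ‖y‖ := by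
      rw [norm_smul]; norm_num
    rw [e1, e2, map_smul, smul_eq_mul] at hj3
    have hsub : j x ≤ ‖x + y‖ := by
      calc j x ≤ |j x| := le_abs_self _
      _ ≤ ‖j‖ * ‖x‖ := j.le_opNorm x
      _ = ‖x + y‖ := by rw [hj2, hx, mul_one]
    have hjx2 : j x = ‖x + y‖ ^ 2 - j y := by
      have := hj1
      rw [map_add] at this
      linarith
    have key : ‖x + y‖ ^ 2 + ‖x - y‖ ^ 2 ≤ 2 + 8 * κ ^ 2 * ‖y‖ ^ 2 := by
      nlinarith [sq_nonneg (‖x + y‖ - 1)]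
    have hyt : ‖y‖ ^ 2 ≤ t ^ 2 := by nlinarith [norm_nonneg y]
    have hA : (0:ℝ) ≤ ‖x + y‖ + ‖x - y‖ := by positivity
    have hsq : (‖x + y‖ + ‖x - y‖) ^ 2 ≤ (2 + 4 * κ ^ 2 * t ^ 2) ^ 2 := by
      nlinarith [sq_nonneg (‖x + y‖ - ‖x - y‖), sq_nonneg (κ ^ 2 * t ^ 2),
        mul_le_mul_of_nonneg_left hyt (sq_nonneg κ)]
    have hM : (0:ℝ) ≤ 2 + 4 * κ ^ 2 * t ^ 2 := by positivity
    have hfin : ‖x + y‖ + ‖x - y‖ ≤ 2 + 4 * κ ^ 2 * t ^ 2 := by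
      nlinarith [hsq, hA, hM]
    linarith
end

section
/- Let g : E → ℝ be convex and Gâteaux-differentiable with gradient ∇g : E → E* Lipschitz continuous with constant L. Then ∇g satisfies the co-coercivity inequality ⟨∇g(x) − ∇g(y), x − y⟩ ≥ (1/L)‖∇g(x) − ∇g(y)‖² for all x, y ∈ E; in particular ∇g is monotone. -/
open NormedSpace

section aux
variable {E : Type*} [NormedAddCommGroup E] [NormedSpace ℝ E]
  (g : E → ℝ) (g' : E → StrongDual ℝ E)

lemma line_deriv (hgdiff : ∀ x v : E, HasDerivAt (fun t : ℝ => g (x + t • v)) (g' x v) 0)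
    (x v : E) (t₀ : ℝ) :
    HasDerivAt (fun t : ℝ => g (x + t • v)) (g' (x + t₀ • v) v) t₀ := by
  have h := hgdiff (x + t₀ • v) v
  have h2 : HasDerivAt (fun t : ℝ => t - t₀) 1 t₀ := (hasDerivAt_id t₀).sub_const t₀
  have h' : HasDerivAt (fun s : ℝ => g (x + t₀ • v + s • v)) (g' (x + t₀ • v) v) (t₀ - t₀) := by
    simpa using h
  have h3 := h'.comp_sub_const (x := t₀) (a := t₀)
  have : (fun t : ℝ => g (x + t₀ • v + (t - t₀) • v)) = fun t : ℝ => g (x + t • v) := by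
    funext t
    congr 1
    module
  rw [this] at h3
  simpa using h3

lemma descent (hgdiff : ∀ x v : E, HasDerivAt (fun t : ℝ => g (x + t • v)) (g' x v) 0)
    (L : ℝ) (hL : 0 < L) (hLip : ∀ x y, ‖g' x - g' y‖ ≤ L * ‖x - y‖)
    (x v : E) : g (x + v) ≤ g x + g' x v + L / 2 * ‖v‖ ^ 2 := by
  set ψ : ℝ → ℝ := fun t => g (x + t • v) - t * (g' x v) - L * ‖v‖ ^ 2 * t ^ 2 / 2 with hψ
  have hder : ∀ t : ℝ, HasDerivAt ψ (g' (x + t • v) v - g' x v - L * ‖v‖ ^ 2 * t) t := by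
    intro t
    have h1 := line_deriv g g' hgdiff x v t
    have h2 : HasDerivAt (fun t : ℝ => t * (g' x v)) (g' x v) t := by
      simpa using (hasDerivAt_id t).mul_const (g' x v)
    have h3 : HasDerivAt (fun t : ℝ => L * ‖v‖ ^ 2 * t ^ 2 / 2) (L * ‖v‖ ^ 2 * t) t := by
      have : HasDerivAt (fun x : ℝ => L * ‖v‖ ^ 2 * x ^ 2 / 2) (L * ‖v‖ ^ 2 * ((2:ℕ) * t ^ (2 - 1)) / 2) t :=
        ((hasDerivAt_pow 2 t).const_mul (L * ‖v‖ ^ 2)).div_const 2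
      convert this using 1
      ring
    exact (h1.sub h2).sub h3
  have hanti : AntitoneOn ψ (Set.Icc 0 1) := by
    apply antitoneOn_of_deriv_nonpos (convex_Icc 0 1)
    · exact fun t _ => (hder t).continuousAt.continuousWithinAt
    · exact fun t _ => ((hder t).differentiableAt).differentiableWithinAt
    · intro t ht
      rw [interior_Icc] at ht
      rw [(hder t).deriv]
      have hb : g' (x + t • v) v - g' x v ≤ L * t * ‖v‖ ^ 2 := by
        have h1 : g' (x + t • v) v - g' x v ≤ ‖g' (x + t • v) - g' x‖ * ‖v‖ := by
          calc g' (x + t • v) v - g' x v = (g' (x + t • v) - g' x) v := by simp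
          _ ≤ |(g' (x + t • v) - g' x) v| := le_abs_self _
          _ ≤ ‖g' (x + t • v) - g' x‖ * ‖v‖ := (g' (x + t • v) - g' x).le_opNorm v
        have h2 : ‖g' (x + t • v) - g' x‖ ≤ L * (t * ‖v‖) := by
          have := hLip (x + t • v) x
          simpa [norm_smul, abs_of_pos ht.1] using this
        calc g' (x + t • v) v - g' x v ≤ L * (t * ‖v‖) * ‖v‖ := by
              refine h1.trans (mul_le_mul_of_nonneg_right h2 (norm_nonneg v))
          _ = L * t * ‖v‖ ^ 2 := by ring
      nlinarith [norm_nonneg v]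
  have := hanti (Set.mem_Icc.2 ⟨le_refl 0, zero_le_one⟩) (Set.mem_Icc.2 ⟨zero_le_one, le_refl 1⟩) zero_le_one
  simp only [hψ] at this
  simp only [one_smul, zero_smul, add_zero] at this
  nlinarith

lemma lower_bound (hgconv : ConvexOn ℝ Set.univ g)
    (hgdiff : ∀ x v : E, HasDerivAt (fun t : ℝ => g (x + t • v)) (g' x v) 0)
    (x y : E) : g x + g' x (y - x) ≤ g y := by
  have hd := hgdiff x (y - x)
  have ht := hasDerivAt_iff_tendsto_slope.1 hd
  have ht2 : Filter.Tendsto (slope (fun t : ℝ => g (x + t • (y - x))) 0) (nhdsWithin 0 (Set.Ioi 0)) (nhds (g' x (y - x))) :=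
    ht.mono_left (nhdsWithin_mono _ (fun t (h : t ∈ Set.Ioi 0) => ne_of_gt h))
  have hbound : ∀ᶠ t in nhdsWithin (0:ℝ) (Set.Ioi 0),
      slope (fun t : ℝ => g (x + t • (y - x))) 0 t ≤ g y - g x := by
    filter_upwards [Ioo_mem_nhdsGT_of_mem (Set.mem_Ico.2 ⟨le_refl 0, zero_lt_one⟩)] with t ht
    obtain ⟨ht0, ht1⟩ := ht
    have hconv := hgconv.2 (Set.mem_univ x) (Set.mem_univ y) (by linarith : (0:ℝ) ≤ 1 - t) ht0.le (by ring)
    have heq : (1 - t) • x + t • y = x + t • (y - x) := by module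
    rw [heq] at hconv
    rw [slope_def_field]
    simp only [zero_smul, add_zero, sub_zero]
    rw [div_le_iff₀ ht0]
    simp only [smul_eq_mul] at hconv
    nlinarith
  have := le_of_tendsto ht2 hbound
  linarith


lemma key_est (hgconv : ConvexOn ℝ Set.univ g)
    (hgdiff : ∀ x v : E, HasDerivAt (fun t : ℝ => g (x + t • v)) (g' x v) 0)
    (L : ℝ) (hL : 0 < L) (hLip : ∀ x y, ‖g' x - g' y‖ ≤ L * ‖x - y‖)
    (x y : E) : ‖g' y - g' x‖ ^ 2 ≤ 2 * L * (g y - g x - g' x (y - x)) := by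
  set f := g' y - g' x with hf
  set D := g y - g x - g' x (y - x) with hD
  have hD0 : 0 ≤ D := by
    have := lower_bound g g' hgconv hgdiff x y
    simp only [hD]; linarith
  have hkey : ∀ v : E, ‖v‖ ≤ 1 → (f v) ^ 2 ≤ 2 * L * D := by
    intro v hv
    set c : ℝ := f v / L with hc
    have hfv : f v = L * c := by rw [hc]; field_simp
    set w : E := -(c • v) with hw
    have h1 := descent g g' hgdiff L hL hLip y w
    have h2 := lower_bound g g' hgconv hgdiff x (y + w)
    have e1 : g' x (y + w - x) = g' x (y - x) + g' x w := by
      rw [show y + w - x = (y - x) + w by abel, map_add]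
    have e2 : f w = g' y w - g' x w := by simp [hf, ContinuousLinearMap.sub_apply]
    have e3 : f w = -(c * f v) := by rw [hw, map_neg, map_smul, smul_eq_mul]
    have e4 : ‖w‖ ≤ |c| := by
      rw [hw, norm_neg, norm_smul, Real.norm_eq_abs]
      calc |c| * ‖v‖ ≤ |c| * 1 := mul_le_mul_of_nonneg_left hv (abs_nonneg _)
        _ = |c| := mul_one _
    have e5 : ‖w‖ ^ 2 ≤ c ^ 2 := by
      have := pow_le_pow_left₀ (norm_nonneg w) e4 2
      rwa [sq_abs] at this
    have hcomb : -(f w) - L / 2 * ‖w‖ ^ 2 ≤ D := by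
      rw [e2]; simp only [hD]
      rw [e1] at h2
      linarith
    rw [e3, neg_neg] at hcomb
    have h6 : L * c ^ 2 / 2 ≤ D := by
      have := mul_le_mul_of_nonneg_left e5 (by positivity : (0:ℝ) ≤ L / 2)
      rw [hfv] at hcomb
      nlinarith
    have h7 := mul_le_mul_of_nonneg_left h6 hL.le
    rw [hfv]
    nlinarith [h7]
  have hnorm : ‖f‖ ≤ Real.sqrt (2 * L * D) := by
    apply f.opNorm_le_bound (Real.sqrt_nonneg _)
    intro u
    rcases eq_or_ne u 0 with rfl | hu
    · simp
    · have hun : ‖u‖ ≠ 0 := norm_ne_zero_iff.2 hu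
      set v : E := ‖u‖⁻¹ • u with hv
      have hv1 : ‖v‖ ≤ 1 := by
        rw [hv, norm_smul, norm_inv, norm_norm, inv_mul_cancel₀ hun]
      have hsq := hkey v hv1
      have habs : |f v| ≤ Real.sqrt (2 * L * D) := by
        have := Real.sqrt_le_sqrt hsq
        rwa [Real.sqrt_sq_eq_abs] at this
      have hfv : f v = ‖u‖⁻¹ * f u := by rw [hv, map_smul]; simp
      rw [Real.norm_eq_abs]
      have : |f u| = ‖u‖ * |f v| := by
        rw [hfv, abs_mul, abs_inv, abs_norm]
        field_simp
      rw [this, mul_comm]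
      exact mul_le_mul_of_nonneg_right habs (norm_nonneg u)
  calc ‖f‖ ^ 2 ≤ Real.sqrt (2 * L * D) ^ 2 :=
        pow_le_pow_left₀ (norm_nonneg f) hnorm 2
    _ = 2 * L * D := Real.sq_sqrt (by positivity)

end aux

/-- If `g : E → ℝ` is convex and Gâteaux differentiable with `L`-Lipschitz
gradient `∇g : E → E*`, then `⟨∇g(x) − ∇g(y), x − y⟩ ≥ (1/L)‖∇g(x) − ∇g(y)‖²`
(co-coercivity); in particular `∇g` is monotone. -/
theorem gradient_cocoercive
    {E : Type*} [NormedAddCommGroup E] [NormedSpace ℝ E] [CompleteSpace E]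
    (g : E → ℝ) (g' : E → StrongDual ℝ E)
    (hgconv : ConvexOn ℝ Set.univ g)
    (hgdiff : ∀ x v : E, HasDerivAt (fun t : ℝ => g (x + t • v)) (g' x v) 0)
    (L : ℝ) (hL : 0 < L)
    (hLip : ∀ x y, ‖g' x - g' y‖ ≤ L * ‖x - y‖) :
    ∀ x y : E, (1 / L) * ‖g' x - g' y‖ ^ 2 ≤ (g' x - g' y) (x - y) ∧
      0 ≤ (g' x - g' y) (x - y) := by
  intro x y
  have k1 := key_est g g' hgconv hgdiff L hL hLip x y
  have k2 := key_est g g' hgconv hgdiff L hL hLip y x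
  rw [norm_sub_rev] at k1
  have e1 : g' x (y - x) = g' x y - g' x x := map_sub _ _ _
  have e2 : g' y (x - y) = g' y x - g' y y := map_sub _ _ _
  have e3 : (g' x - g' y) (x - y) = (g' x x - g' x y) - (g' y x - g' y y) := by
    simp only [ContinuousLinearMap.sub_apply, map_sub]
    ring
  rw [e1] at k1; rw [e2] at k2
  have hmain : (1 / L) * ‖g' x - g' y‖ ^ 2 ≤ (g' x - g' y) (x - y) := by
    rw [e3, one_div, inv_mul_eq_div, div_le_iff₀ hL]
    nlinarith [k1, k2]
  refine ⟨hmain, le_trans ?_ hmain⟩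
  positivity
end

section
/- In the setting of Tseng's algorithm in a 2-uniformly convex, uniformly smooth Banach space, the one-step estimate holds: if x* ∈ (A+B)⁻¹(0), y = J_λ^B(J⁻¹(Jx − λAx)) and x⁺ = J⁻¹(Jy − λ(Ay − Ax)), then φ(x*, x⁺) ≤ φ(x*, x) − (1 − 2κ²λ²L²μ)·φ(y, x), where κ is the 2-uniform smoothness constant of E*, μ the constant from (1/μ)‖u−v‖² ≤ φ(u,v), and L the Lipschitz constant of A. -/
open NormedSpace

/-- One-step estimate for Tseng's algorithm in a 2-uniformly convex,
uniformly smooth Banach space: if `0 ∈ (A+B)x*`, `y = J_λ^B (J⁻¹(Jx − λAx))` and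
`x⁺ = J⁻¹(Jy − λ(Ay − Ax))`, then
`φ(x*, x⁺) ≤ φ(x*, x) − (1 − 2κ²λ²L²μ) φ(y, x)`. -/
theorem tseng_one_step_estimate
    {E : Type*} [NormedAddCommGroup E] [NormedSpace ℝ E] [CompleteSpace E]
    (J : E → StrongDual ℝ E) (Jinv : StrongDual ℝ E → E)
    (hJ : ∀ u, J u u = ‖u‖ ^ 2) (hJnorm : ∀ u, ‖J u‖ = ‖u‖)
    (hJinv : ∀ f, J (Jinv f) = f) (hinvJ : ∀ u, Jinv (J u) = u)
    (φ : E → E → ℝ) (hφ : ∀ u v, φ u v = ‖u‖ ^ 2 - 2 * J v u + ‖v‖ ^ 2)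
    (κ μ L lam : ℝ) (hκ : 0 < κ) (hμ : 1 ≤ μ) (hL : 0 < L) (hlam : 0 < lam)
    -- 2-uniform smoothness inequality in the dual `E*`
    (hsmooth : ∀ (u : E) (g : StrongDual ℝ E),
      ‖J u + g‖ ^ 2 ≤ ‖J u‖ ^ 2 + 2 * g u + 2 * κ ^ 2 * ‖g‖ ^ 2)
    -- 2-uniform convexity of `E`
    (hconv : ∀ u v : E, (1 / μ) * ‖u - v‖ ^ 2 ≤ φ u v)
    (A : E → StrongDual ℝ E) (B : E → Set (StrongDual ℝ E))
    (hAmono : ∀ u v, 0 ≤ (A u - A v) (u - v))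
    (hALip : ∀ u v, ‖A u - A v‖ ≤ L * ‖u - v‖)
    (hBmono : ∀ u v, ∀ us ∈ B u, ∀ vs ∈ B v, 0 ≤ (us - vs) (u - v))
    (x y xs xp : E)
    (hxs : ∃ b ∈ B xs, A xs + b = 0)
    (hy : ∃ b ∈ B y, J x - lam • A x = J y + lam • b)
    (hxp : xp = Jinv (J y - lam • (A y - A x))) :
    φ xs xp ≤ φ xs x - (1 - 2 * κ ^ 2 * lam ^ 2 * L ^ 2 * μ) * φ y x := by
  obtain ⟨bs, hbs, heqs⟩ := hxs
  obtain ⟨b, hb, heq⟩ := hy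
  have hμ0 : (0:ℝ) < μ := lt_of_lt_of_le one_pos hμ
  have hJxp : J xp = J y - lam • (A y - A x) := by rw [hxp, hJinv]
  -- smoothness estimate
  have F1 : ‖xp‖ ^ 2 ≤ ‖y‖ ^ 2 - 2 * lam * ((A y) y - (A x) y)
      + 2 * κ ^ 2 * lam ^ 2 * ‖A y - A x‖ ^ 2 := by
    have h := hsmooth y (-(lam • (A y - A x)))
    have h1 : J y + -(lam • (A y - A x)) = J xp := by rw [hJxp]; abel
    rw [h1, hJnorm, hJnorm] at h
    have h2 : ‖-(lam • (A y - A x))‖ ^ 2 = lam ^ 2 * ‖A y - A x‖ ^ 2 := by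
      rw [norm_neg, norm_smul]
      simp [abs_of_pos hlam, mul_pow]
    rw [h2] at h
    have h3 : (-(lam • (A y - A x))) y = -(lam * ((A y) y - (A x) y)) := by
      simp [smul_eq_mul]
    rw [h3] at h
    linarith
  -- equation from the resolvent
  have hF2 : ((J x) xs - (J x) y) - lam * ((A x) xs - (A x) y)
      = ((J y) xs - (J y) y) + lam * (b xs - b y) := by
    have h := congrArg (fun f : StrongDual ℝ E => f (xs - y)) heq
    simp only [ContinuousLinearMap.sub_apply, ContinuousLinearMap.add_apply,
      ContinuousLinearMap.coe_smul', Pi.smul_apply, smul_eq_mul, map_sub] at h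
    linarith
  -- monotonicity facts
  have hM1 : 0 ≤ ((A y) y - (A y) xs) - ((A xs) y - (A xs) xs) := by
    have h := hAmono y xs
    simp only [ContinuousLinearMap.sub_apply, map_sub] at h
    linarith
  have hM2 : 0 ≤ (b y - b xs) - (bs y - bs xs) := by
    have h := hBmono y xs b hb bs hbs
    simp only [ContinuousLinearMap.sub_apply, map_sub] at h
    linarith
  have hE1 : (A xs) y + bs y = 0 := by
    have h := congrArg (fun f : StrongDual ℝ E => f y) heqs
    simpa using h
  have hE2 : (A xs) xs + bs xs = 0 := by
    have h := congrArg (fun f : StrongDual ℝ E => f xs) heqs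
    simpa using h
  have hS : 0 ≤ (A y) y - (A y) xs + (b y - b xs) := by linarith
  have hMl : 0 ≤ lam * ((A y) y - (A y) xs + (b y - b xs)) :=
    mul_nonneg hlam.le hS
  -- Lipschitz + convexity
  have hPnn : 0 ≤ φ y x := le_trans (by positivity) (hconv y x)
  have hD : ‖y - x‖ ^ 2 ≤ μ * φ y x := by
    have h := hconv y x
    rw [div_mul_eq_mul_div, div_le_iff₀ hμ0, one_mul] at h
    linarith [h, mul_comm μ (φ y x)]
  have hN : ‖A y - A x‖ ^ 2 ≤ L ^ 2 * ‖y - x‖ ^ 2 := by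
    have h := pow_le_pow_left₀ (norm_nonneg _) (hALip y x) 2
    rw [mul_pow] at h
    exact h
  have hK : 2 * κ ^ 2 * lam ^ 2 * ‖A y - A x‖ ^ 2
      ≤ 2 * κ ^ 2 * lam ^ 2 * L ^ 2 * μ * φ y x := by
    have hc : (0:ℝ) ≤ 2 * κ ^ 2 * lam ^ 2 := by positivity
    have h1 : ‖A y - A x‖ ^ 2 ≤ L ^ 2 * (μ * φ y x) := by
      refine le_trans hN ?_
      have := mul_le_mul_of_nonneg_left hD (by positivity : (0:ℝ) ≤ L ^ 2)
      linarith
    have h2 := mul_le_mul_of_nonneg_left h1 hc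
    ring_nf at h2 ⊢
    linarith [h2]
  -- assemble
  have hJxpxs : (J xp) xs = (J y) xs - lam * ((A y) xs - (A x) xs) := by
    rw [hJxp]; simp [smul_eq_mul, mul_sub]
  have hJyy : (J y) y = ‖y‖ ^ 2 := hJ y
  have hP := hφ y x
  have hexp : (1 - 2 * κ ^ 2 * lam ^ 2 * L ^ 2 * μ) * φ y x
      = φ y x - 2 * κ ^ 2 * lam ^ 2 * L ^ 2 * μ * φ y x := by ring
  rw [hφ xs xp, hφ xs x, hJxpxs]
  linarith
end

section
/- In Tseng's algorithm with constant step-size bounds 0 < a ≤ λ_n ≤ b < 1/(√(2μ)κL), the sequence generated by x_{n+1} = J⁻¹(Jy_n − λ_n(Ay_n − Ax_n)) with y_n = J_{λ_n}^B(J⁻¹(Jx_n − λ_nAx_n)) satisfies the rate estimate min_{1≤k≤n} ‖x_k − y_k‖² ≤ μ·φ(x*, x_1) / (n(1 − 2κ²b²L²μ)) for any zero x* of A+B; in particular min_{1≤k≤n}‖x_k − y_k‖ = O(1/√n). -/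
open NormedSpace

set_option maxHeartbeats 1000000 in
/-- Rate of convergence of Tseng's algorithm with step sizes
`0 < a ≤ λ_n ≤ b < 1/(√(2μ) κ L)`:
`min_{1≤k≤n} ‖x_k − y_k‖² ≤ μ φ(x*, x₁) / (n (1 − 2κ²b²L²μ))`. -/
theorem tseng_rate_estimate
    {E : Type*} [NormedAddCommGroup E] [NormedSpace ℝ E] [CompleteSpace E]
    (J : E → StrongDual ℝ E) (Jinv : StrongDual ℝ E → E)
    (hJ : ∀ u, J u u = ‖u‖ ^ 2) (hJnorm : ∀ u, ‖J u‖ = ‖u‖)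
    (hJinv : ∀ f, J (Jinv f) = f) (hinvJ : ∀ u, Jinv (J u) = u)
    (φ : E → E → ℝ) (hφ : ∀ u v, φ u v = ‖u‖ ^ 2 - 2 * J v u + ‖v‖ ^ 2)
    (κ μ L : ℝ) (hκ : 0 < κ) (hμ : 1 ≤ μ) (hL : 0 < L)
    (hsmooth : ∀ (u : E) (g : StrongDual ℝ E),
      ‖J u + g‖ ^ 2 ≤ ‖J u‖ ^ 2 + 2 * g u + 2 * κ ^ 2 * ‖g‖ ^ 2)
    (hconv : ∀ u v : E, (1 / μ) * ‖u - v‖ ^ 2 ≤ φ u v)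
    (A : E → StrongDual ℝ E) (B : E → Set (StrongDual ℝ E))
    (hAmono : ∀ u v, 0 ≤ (A u - A v) (u - v))
    (hALip : ∀ u v, ‖A u - A v‖ ≤ L * ‖u - v‖)
    (hBmono : ∀ u v, ∀ us ∈ B u, ∀ vs ∈ B v, 0 ≤ (us - vs) (u - v))
    (a b : ℝ) (lam : ℕ → ℝ)
    (ha : 0 < a) (hb : b < 1 / (Real.sqrt (2 * μ) * κ * L))
    (hlam : ∀ n, a ≤ lam n ∧ lam n ≤ b)
    (x y : ℕ → E)
    (hy : ∀ n, ∃ bn ∈ B (y n), J (x n) - lam n • A (x n) = J (y n) + lam n • bn)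
    (hx : ∀ n, x (n + 1) = Jinv (J (y n) - lam n • (A (y n) - A (x n))))
    (xs : E) (hxs : ∃ bs ∈ B xs, A xs + bs = 0) :
    ∀ n : ℕ, 1 ≤ n → ∃ k, 1 ≤ k ∧ k ≤ n ∧
      ‖x k - y k‖ ^ 2 ≤ μ * φ xs (x 1) / ((n : ℝ) * (1 - 2 * κ ^ 2 * b ^ 2 * L ^ 2 * μ)) := by
  obtain ⟨bs, hbs, hbs0⟩ := hxs
  have hμ0 : (0:ℝ) < μ := lt_of_lt_of_le one_pos hμ
  have hbpos : (0:ℝ) < b := lt_of_lt_of_le ha (le_trans (hlam 0).1 (hlam 0).2)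
  have hspos : 0 < Real.sqrt (2*μ) := Real.sqrt_pos.mpr (by linarith)
  have hs2 : Real.sqrt (2*μ)^2 = 2*μ := Real.sq_sqrt (by linarith)
  have h1 : b * (Real.sqrt (2*μ) * κ * L) < 1 := by
    have hpos : 0 < Real.sqrt (2*μ) * κ * L := by positivity
    calc b * (Real.sqrt (2*μ) * κ * L)
        < (1 / (Real.sqrt (2*μ) * κ * L)) * (Real.sqrt (2*μ) * κ * L) :=
          mul_lt_mul_of_pos_right hb hpos
      _ = 1 := by field_simp
  have hc1 : 2*κ^2*b^2*L^2*μ < 1 := by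
    have ht0 : 0 ≤ b * (Real.sqrt (2*μ) * κ * L) := by positivity
    have hsq : (b * (Real.sqrt (2*μ) * κ * L))^2 < 1 := by nlinarith [h1, ht0]
    have hexp : (b * (Real.sqrt (2*μ) * κ * L))^2 = 2*κ^2*b^2*L^2*μ := by
      calc (b * (Real.sqrt (2*μ) * κ * L))^2
          = b^2 * (Real.sqrt (2*μ))^2 * κ^2 * L^2 := by ring
        _ = 2*κ^2*b^2*L^2*μ := by rw [hs2]; ring
    linarith [hexp ▸ hsq]
  set D : ℝ := 1/μ - 2*κ^2*b^2*L^2 with hD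
  have hDpos : 0 < D := by
    rw [hD, sub_pos, lt_div_iff₀ hμ0]; exact hc1
  have hstep : ∀ n, φ xs (x (n+1)) ≤ φ xs (x n) - D * ‖x n - y n‖^2 := by
    intro n
    obtain ⟨bn, hbn, heq⟩ := hy n
    have hlpos : 0 < lam n := lt_of_lt_of_le ha (hlam n).1
    have hlb : lam n ≤ b := (hlam n).2
    have hJX1 : J (x (n+1)) = J (y n) - lam n • (A (y n) - A (x n)) := by
      rw [hx n, hJinv]
    have hsm := hsmooth (y n) (-(lam n • (A (y n) - A (x n))))
    have hsumg : J (y n) + -(lam n • (A (y n) - A (x n))) = J (x (n+1)) := by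
      rw [hJX1]; abel
    rw [hsumg] at hsm
    have hnormg : ‖-(lam n • (A (y n) - A (x n)))‖ = lam n * ‖A (y n) - A (x n)‖ := by
      rw [norm_neg, norm_smul, Real.norm_eq_abs, abs_of_pos hlpos]
    have hLip : ‖A (y n) - A (x n)‖ ≤ L * ‖x n - y n‖ := by
      rw [norm_sub_rev (x n) (y n)]
      exact hALip _ _
    have happ1 : (-(lam n • (A (y n) - A (x n)))) (y n)
        = -(lam n * (A (y n) (y n) - A (x n) (y n))) := by
      simp
    rw [hJnorm, hJnorm, happ1, hnormg] at hsm
    have happ2 : J (x (n+1)) xs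
        = J (y n) xs - lam n * (A (y n) xs - A (x n) xs) := by
      rw [hJX1]; simp
    have happ3 : ∀ z, J (x n) z - lam n * (A (x n) z) = J (y n) z + lam n * bn z := by
      intro z
      have h := congrArg (fun f : StrongDual ℝ E => f z) heq
      simpa using h
    have hz1 : (A xs) (y n) + bs (y n) = 0 := by
      have h := congrArg (fun f : StrongDual ℝ E => f (y n)) hbs0
      simpa using h
    have hz2 : (A xs) xs + bs xs = 0 := by
      have h := congrArg (fun f : StrongDual ℝ E => f xs) hbs0
      simpa using h
    have h5 := hAmono (y n) xs
    have h6 := hBmono (y n) xs bn hbn bs hbs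
    simp only [ContinuousLinearMap.sub_apply, map_sub] at h5 h6
    have hM : 0 ≤ lam n * (A (y n) (y n) + bn (y n) - (A (y n) xs + bn xs)) := by
      apply mul_nonneg hlpos.le
      linarith
    have h2 : ‖A (y n) - A (x n)‖^2 ≤ L^2 * ‖x n - y n‖^2 := by
      have := pow_le_pow_left₀ (norm_nonneg _) hLip 2
      calc ‖A (y n) - A (x n)‖^2 ≤ (L * ‖x n - y n‖)^2 := this
        _ = L^2 * ‖x n - y n‖^2 := by ring
    have h3 : (lam n)^2 ≤ b^2 := pow_le_pow_left₀ hlpos.le hlb 2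
    have h4 : (lam n)^2 * ‖A (y n) - A (x n)‖^2 ≤ b^2 * (L^2 * ‖x n - y n‖^2) :=
      mul_le_mul h3 h2 (sq_nonneg _) (sq_nonneg _)
    have hquad : 2*κ^2*(lam n * ‖A (y n) - A (x n)‖)^2
        ≤ 2*κ^2*b^2*L^2*‖x n - y n‖^2 := by
      calc 2*κ^2*(lam n * ‖A (y n) - A (x n)‖)^2
          = 2*κ^2*((lam n)^2 * ‖A (y n) - A (x n)‖^2) := by ring
        _ ≤ 2*κ^2*(b^2 * (L^2 * ‖x n - y n‖^2)) :=
            mul_le_mul_of_nonneg_left h4 (by positivity)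
        _ = 2*κ^2*b^2*L^2*‖x n - y n‖^2 := by ring
    have hconv' := hconv (y n) (x n)
    rw [norm_sub_rev (y n) (x n)] at hconv'
    have hjYY := hJ (y n)
    have h3a := happ3 xs
    have h3b := happ3 (y n)
    rw [hjYY] at h3b
    rw [hD]
    linarith [hsm, hquad, hM, hconv', h3a, h3b, happ2,
      hφ xs (x (n+1)), hφ xs (x n), hφ (y n) (x n)]
  have hsum : ∀ n, D * ∑ k ∈ Finset.Icc 1 n, ‖x k - y k‖^2
      ≤ φ xs (x 1) - φ xs (x (n+1)) := by
    intro n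
    induction n with
    | zero => simp
    | succ m ih =>
      rw [Finset.sum_Icc_succ_top (by omega : 1 ≤ m+1)]
      have h := hstep (m+1)
      have := mul_nonneg hDpos.le (sq_nonneg ‖x (m+1) - y (m+1)‖)
      nlinarith [ih, h]
  intro n hn
  have hne : (Finset.Icc 1 n).Nonempty := ⟨1, by simp [hn]⟩
  obtain ⟨k, hk, hkmin⟩ := Finset.exists_min_image (Finset.Icc 1 n)
    (fun j => ‖x j - y j‖^2) hne
  obtain ⟨hk1, hk2⟩ := Finset.mem_Icc.mp hk
  refine ⟨k, hk1, hk2, ?_⟩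
  have hcard : (Finset.Icc 1 n).card = n := by
    rw [Nat.card_Icc]; omega
  have hnsum : (n : ℝ) * ‖x k - y k‖^2 ≤ ∑ j ∈ Finset.Icc 1 n, ‖x j - y j‖^2 := by
    calc (n:ℝ) * ‖x k - y k‖^2 = ∑ _j ∈ Finset.Icc 1 n, ‖x k - y k‖^2 := by
          rw [Finset.sum_const, hcard, nsmul_eq_mul]
      _ ≤ ∑ j ∈ Finset.Icc 1 n, ‖x j - y j‖^2 :=
          Finset.sum_le_sum (fun j hj => hkmin j hj)
  have hφpos : 0 ≤ φ xs (x (n+1)) :=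
    le_trans (by positivity) (hconv xs (x (n+1)))
  have hDn : D * ((n:ℝ) * ‖x k - y k‖^2) ≤ φ xs (x 1) := by
    calc D * ((n:ℝ) * ‖x k - y k‖^2)
        ≤ D * ∑ j ∈ Finset.Icc 1 n, ‖x j - y j‖^2 :=
          mul_le_mul_of_nonneg_left hnsum hDpos.le
      _ ≤ φ xs (x 1) - φ xs (x (n+1)) := hsum n
      _ ≤ φ xs (x 1) := by linarith
  have hnpos : (0:ℝ) < (n:ℝ) := by exact_mod_cast Nat.pos_of_ne_zero (by omega)
  have hcpos : 0 < 1 - 2*κ^2*b^2*L^2*μ := by linarith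
  have hden : (0:ℝ) < (n:ℝ) * (1 - 2*κ^2*b^2*L^2*μ) := mul_pos hnpos hcpos
  rw [le_div_iff₀ hden]
  have hmul : μ * (D * ((n:ℝ) * ‖x k - y k‖^2))
      = ‖x k - y k‖^2 * ((n:ℝ) * (1 - 2*κ^2*b^2*L^2*μ)) := by
    rw [hD]; field_simp
  calc ‖x k - y k‖^2 * ((n:ℝ) * (1 - 2*κ^2*b^2*L^2*μ))
      = μ * (D * ((n:ℝ) * ‖x k - y k‖^2)) := hmul.symm
    _ ≤ μ * φ xs (x 1) := mul_le_mul_of_nonneg_left hDn hμ0.le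
end

section
/- In the Armijo-type line search of Algorithm 3.8, the step-size λ_n chosen as the largest λ ∈ {γ, γl, γl², …} satisfying λ‖Ax_n − A(J_λ^B J⁻¹(Jx_n − λAx_n))‖ ≤ θ‖x_n − J_λ^B J⁻¹(Jx_n − λAx_n)‖ is well-defined and satisfies min{γ, θl/L} ≤ λ_n ≤ γ. -/
open NormedSpace

/-- The Armijo-type line search is well defined: the largest
`λ ∈ {γ, γl, γl², …}` satisfying
`λ‖Ax − A(J_λ^B J⁻¹(Jx − λAx))‖ ≤ θ‖x − J_λ^B J⁻¹(Jx − λAx)‖` exists and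
satisfies `min{γ, θl/L} ≤ λ_n ≤ γ`.  Here `T λ` denotes `J_λ^B (J⁻¹ (Jx − λAx))`. -/
theorem linesearch_well_defined
    {E : Type*} [NormedAddCommGroup E] [NormedSpace ℝ E] [CompleteSpace E]
    (A : E → StrongDual ℝ E) (L : ℝ) (hL : 0 < L)
    (hALip : ∀ u v, ‖A u - A v‖ ≤ L * ‖u - v‖)
    (γ l θ : ℝ) (hγ : 0 < γ) (hl0 : 0 < l) (hl1 : l < 1) (hθ : 0 < θ)
    (x : E) (T : ℝ → E) :
    ∃ lamn : ℝ, (∃ k : ℕ, lamn = γ * l ^ k) ∧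
      lamn * ‖A x - A (T lamn)‖ ≤ θ * ‖x - T lamn‖ ∧
      (∀ k : ℕ, γ * l ^ k * ‖A x - A (T (γ * l ^ k))‖ ≤ θ * ‖x - T (γ * l ^ k)‖ →
        γ * l ^ k ≤ lamn) ∧
      min γ (θ * l / L) ≤ lamn ∧ lamn ≤ γ := by
  set P : ℕ → Prop := fun k =>
    γ * l ^ k * ‖A x - A (T (γ * l ^ k))‖ ≤ θ * ‖x - T (γ * l ^ k)‖ with hP
  -- any step with γ l^k ≤ θ/L satisfies P
  have key : ∀ k : ℕ, γ * l ^ k ≤ θ / L → P k := by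
    intro k hk
    have hpos : 0 ≤ γ * l ^ k := le_of_lt (mul_pos hγ (pow_pos hl0 k))
    calc γ * l ^ k * ‖A x - A (T (γ * l ^ k))‖
        ≤ (θ / L) * (L * ‖x - T (γ * l ^ k)‖) := by
          apply mul_le_mul hk (hALip _ _) (norm_nonneg _)
          positivity
      _ = θ * ‖x - T (γ * l ^ k)‖ := by field_simp
  have hexP : ∃ k, P k := by
    obtain ⟨k, hk⟩ := exists_pow_lt_of_lt_one (x := θ / (L * γ)) (by positivity) hl1
    rw [div_mul_eq_div_div] at hk
    refine ⟨k, key k ?_⟩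
    calc γ * l ^ k ≤ γ * (θ / L / γ) := mul_le_mul_of_nonneg_left hk.le hγ.le
      _ = θ / L := by field_simp
  classical
  set k₀ := Nat.find hexP with hk0
  refine ⟨γ * l ^ k₀, ⟨k₀, rfl⟩, Nat.find_spec hexP, ?_, ?_, ?_⟩
  · intro k hk
    have hkk : k₀ ≤ k := Nat.find_min' hexP hk
    have : l ^ k ≤ l ^ k₀ := pow_le_pow_of_le_one hl0.le hl1.le hkk
    exact mul_le_mul_of_nonneg_left this hγ.le
  · rcases Nat.eq_zero_or_pos k₀ with h0 | h0
    · rw [h0]; simp only [pow_zero, mul_one]; exact min_le_left γ (θ * l / L)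
    · obtain ⟨m, hm⟩ : ∃ m, k₀ = m + 1 := ⟨k₀ - 1, by omega⟩
      have hnot : ¬ P m := Nat.find_min hexP (by omega)
      have hgt : θ / L < γ * l ^ m := by
        by_contra h
        exact hnot (key m (le_of_not_gt h))
      have : θ * l / L < γ * l ^ k₀ := by
        rw [hm, pow_succ, ← mul_assoc]
        calc θ * l / L = (θ / L) * l := by ring
          _ < γ * l ^ m * l := by
              exact mul_lt_mul_of_pos_right hgt hl0
      exact le_trans (min_le_right _ _) this.le
  · have : l ^ k₀ ≤ 1 := pow_le_one₀ hl0.le hl1.le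
    calc γ * l ^ k₀ ≤ γ * 1 := mul_le_mul_of_nonneg_left this hγ.le
      _ = γ := mul_one γ
end

section
/- Let S be a nonempty closed convex subset of a uniformly convex, smooth Banach space E and {x_n} ⊂ E a sequence such that φ(u, x_{n+1}) ≤ φ(u, x_n) for all u ∈ S and all n ≥ 1. Then the sequence of generalized projections {Π_S(x_n)} is Cauchy. -/
open NormedSpace

set_option maxHeartbeats 1000000 in
/-- Quantitative uniform convexity for the squared norm on bounded sets. -/
lemma uc_sq_aux {E : Type*} [NormedAddCommGroup E] [NormedSpace ℝ E] [UniformConvexSpace E]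
    {R ε : ℝ} (hR : 1 ≤ R) (hε : 0 < ε) :
    ∃ c > 0, ∀ p q : E, ‖p‖ ≤ R → ‖q‖ ≤ R → ε ≤ ‖p - q‖ →
      c ≤ (‖p‖ ^ 2 + ‖q‖ ^ 2) / 2 - ‖p + q‖ ^ 2 / 4 := by
  have hR0 : (0:ℝ) < R := lt_of_lt_of_le one_pos hR
  obtain ⟨δ₀, hδ₀, hconv⟩ :=
    exists_forall_closed_ball_dist_add_le_two_sub E (div_pos hε (by linarith : (0:ℝ) < 2 * R))
  set δ : ℝ := min δ₀ 1 with hδdef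
  have hδpos : 0 < δ := lt_min hδ₀ one_pos
  have hδ1 : δ ≤ 1 := min_le_right _ _
  refine ⟨min ((δ * ε / 8) ^ 2 / 4) (δ * ε ^ 2 / 8),
    lt_min (by positivity) (by positivity), fun p q hp hq hpq => ?_⟩
  set a := ‖p‖ with hadef
  set b := ‖q‖ with hbdef
  set n := ‖p + q‖ with hndef
  have ha0 : 0 ≤ a := norm_nonneg _
  have hb0 : 0 ≤ b := norm_nonneg _
  have hn0 : 0 ≤ n := norm_nonneg _
  have hab : n ≤ a + b := norm_add_le _ _
  set M : ℝ := max a b with hM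
  have haM : a ≤ M := le_max_left _ _
  have hbM : b ≤ M := le_max_right _ _
  have hMa : M ≤ a ∨ M ≤ b := by
    rcases max_cases a b with ⟨h, _⟩ | ⟨h, _⟩
    · exact Or.inl h.le
    · exact Or.inr h.le
  have hMR : M ≤ R := max_le hp hq
  have hM2 : ε ≤ 2 * M := by
    have h1 := norm_sub_le p q
    have h2 : ε ≤ a + b := le_trans hpq h1
    linarith
  have hM0 : 0 < M := by nlinarith
  rcases le_or_gt (δ * ε / 8) |a - b| with hcase | hcase
  · -- Case 1: norms differ significantly
    refine le_trans (min_le_left _ _) ?_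
    have h1 : (δ * ε / 8) ^ 2 ≤ (a - b) ^ 2 := by
      rw [← sq_abs (a - b)]
      have h0 : 0 ≤ δ * ε / 8 := by positivity
      nlinarith [abs_nonneg (a - b)]
    clear_value a b n M
    have h7 : n ^ 2 ≤ (a + b) ^ 2 := by nlinarith
    nlinarith
  · -- Case 2: norms close; normalize by M and use uniform convexity
    refine le_trans (min_le_right _ _) ?_
    have hx1 : ‖M⁻¹ • p‖ ≤ 1 := by
      rw [norm_smul, norm_inv, Real.norm_of_nonneg hM0.le, inv_mul_le_iff₀ hM0]
      simpa using haM
    have hy1 : ‖M⁻¹ • q‖ ≤ 1 := by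
      rw [norm_smul, norm_inv, Real.norm_of_nonneg hM0.le, inv_mul_le_iff₀ hM0]
      simpa using hbM
    have hxy : ε / (2 * R) ≤ ‖M⁻¹ • p - M⁻¹ • q‖ := by
      rw [← smul_sub, norm_smul, norm_inv, Real.norm_of_nonneg hM0.le, ← div_eq_inv_mul]
      calc ε / (2 * R) ≤ ε / M := by
            apply div_le_div_of_nonneg_left hε.le hM0; linarith
        _ ≤ ‖p - q‖ / M := by gcongr
    have hsum : n ≤ (2 - δ) * M := by
      have h := hconv hx1 hy1 hxy
      rw [← smul_add, norm_smul, norm_inv, Real.norm_of_nonneg hM0.le, ← hndef] at h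
      have hδδ : δ ≤ δ₀ := min_le_left _ _
      have h2 : M⁻¹ * n ≤ 2 - δ := le_trans h (by linarith)
      calc n = M * (M⁻¹ * n) := by field_simp
        _ ≤ M * (2 - δ) := by
            apply mul_le_mul_of_nonneg_left h2 hM0.le
        _ = (2 - δ) * M := mul_comm _ _
    obtain ⟨hl, hr⟩ := abs_lt.mp hcase
    have habs : 2 * M - δ * ε / 8 ≤ a + b := by
      rcases hMa with h | h
      · linarith
      · linarith
    have hδε : δ * ε ≤ ε := by nlinarith
    have hnn : 0 ≤ 2 * M - δ * ε / 8 := by linarith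
    have h5 : (2 * M - δ * ε / 8) ^ 2 ≤ (a + b) ^ 2 := pow_le_pow_left₀ hnn habs 2
    have h6 : n ^ 2 ≤ ((2 - δ) * M) ^ 2 := pow_le_pow_left₀ hn0 hsum 2
    clear_value a b n M
    have key : 4 * (δ * ε ^ 2 / 8) ≤ (2 * M - δ * ε / 8) ^ 2 - ((2 - δ) * M) ^ 2 := by
      nlinarith [mul_nonneg (mul_nonneg hδpos.le hM0.le) (by linarith : (0:ℝ) ≤ 2 * M - ε),
        mul_nonneg (mul_nonneg hδpos.le hε.le) (by linarith : (0:ℝ) ≤ 2 * M - ε),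
        mul_nonneg (mul_nonneg (by linarith : (0:ℝ) ≤ 1 - δ) hδpos.le) (sq_nonneg M),
        sq_nonneg (δ * ε)]
    nlinarith [sq_nonneg (a - b)]

set_option maxHeartbeats 1000000 in
/-- Let `S` be a nonempty closed convex subset of a uniformly convex, smooth
Banach space and `{xₙ}` a sequence with `φ(u, x_{n+1}) ≤ φ(u, xₙ)` for all `u ∈ S` and all
`n`. Then the sequence of generalized projections `{Π_S(xₙ)}` is Cauchy. -/
theorem generalized_projections_cauchy
    {E : Type*} [NormedAddCommGroup E] [NormedSpace ℝ E] [CompleteSpace E]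
    [UniformConvexSpace E]
    (J : E → StrongDual ℝ E)
    (hJ : ∀ u, J u u = ‖u‖ ^ 2) (hJnorm : ∀ u, ‖J u‖ = ‖u‖)
    (φ : E → E → ℝ) (hφ : ∀ u v, φ u v = ‖u‖ ^ 2 - 2 * J v u + ‖v‖ ^ 2)
    (S : Set E) (hSne : S.Nonempty) (hScl : IsClosed S) (hSconv : Convex ℝ S)
    -- the generalized (Alber) projection onto `S`
    (P : E → E) (hP : ∀ x, P x ∈ S ∧ ∀ u ∈ S, φ (P x) x ≤ φ u x)
    (x : ℕ → E) (hx : ∀ u ∈ S, ∀ n : ℕ, 1 ≤ n → φ u (x (n + 1)) ≤ φ u (x n)) :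
    CauchySeq (fun n => P (x n)) := by
  obtain ⟨u₀, hu₀⟩ := hSne
  set p : ℕ → E := fun n => P (x n) with hpdef
  have hpS : ∀ n, p n ∈ S := fun n => (hP (x n)).1
  have hpmin : ∀ n, ∀ u ∈ S, φ (p n) (x n) ≤ φ u (x n) := fun n => (hP (x n)).2
  have hφlb : ∀ u v : E, (‖u‖ - ‖v‖) ^ 2 ≤ φ u v := by
    intro u v
    have h1 : (J v) u ≤ ‖v‖ * ‖u‖ := by
      have h2 := (J v).le_opNorm u
      rw [hJnorm v] at h2
      calc (J v) u ≤ |(J v) u| := le_abs_self _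
        _ = ‖(J v) u‖ := (Real.norm_eq_abs _).symm
        _ ≤ ‖v‖ * ‖u‖ := h2
    rw [hφ]; nlinarith
  have hφ0 : ∀ u v : E, 0 ≤ φ u v := fun u v => le_trans (sq_nonneg _) (hφlb u v)
  have hmono : ∀ u ∈ S, ∀ n m : ℕ, 1 ≤ n → n ≤ m → φ u (x m) ≤ φ u (x n) := by
    intro u hu n m hn hnm
    induction m, hnm using Nat.le_induction with
    | base => exact le_rfl
    | succ m hm ih => exact le_trans (hx u hu m (le_trans hn hm)) ih
  set a : ℕ → ℝ := fun n => φ (p n) (x n) with hadef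
  have hamono : ∀ n m : ℕ, 1 ≤ n → n ≤ m → a m ≤ a n := by
    intro n m hn hnm
    calc a m ≤ φ (p n) (x m) := hpmin m (p n) (hpS n)
      _ ≤ φ (p n) (x n) := hmono (p n) (hpS n) n m hn hnm
  have ha0 : ∀ n, 0 ≤ a n := fun n => hφ0 _ _
  set C : ℝ := φ u₀ (x 1) with hCdef
  have hC0 : 0 ≤ C := hφ0 _ _
  have hxb : ∀ n, 1 ≤ n → ‖x n‖ ≤ ‖u₀‖ + Real.sqrt C := by
    intro n hn
    have h1 : φ u₀ (x n) ≤ C := hmono u₀ hu₀ 1 n le_rfl hn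
    have h2 : (‖u₀‖ - ‖x n‖) ^ 2 ≤ C := le_trans (hφlb _ _) h1
    have h3 : |‖u₀‖ - ‖x n‖| ≤ Real.sqrt C := by
      rw [← Real.sqrt_sq_eq_abs]; exact Real.sqrt_le_sqrt h2
    linarith [(abs_le.mp h3).1]
  have hpb : ∀ n, 1 ≤ n → ‖p n‖ ≤ ‖u₀‖ + 2 * Real.sqrt C := by
    intro n hn
    have h1 : a n ≤ C := le_trans (hpmin n u₀ hu₀) (hmono u₀ hu₀ 1 n le_rfl hn)
    have h2 : (‖p n‖ - ‖x n‖) ^ 2 ≤ C := le_trans (hφlb _ _) h1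
    have h3 : |‖p n‖ - ‖x n‖| ≤ Real.sqrt C := by
      rw [← Real.sqrt_sq_eq_abs]; exact Real.sqrt_le_sqrt h2
    linarith [(abs_le.mp h3).2, hxb n hn]
  set R : ℝ := max 1 (‖u₀‖ + 2 * Real.sqrt C) with hRdef
  have hR1 : 1 ≤ R := le_max_left _ _
  have hpR : ∀ n, 1 ≤ n → ‖p n‖ ≤ R := fun n hn => le_trans (hpb n hn) (le_max_right _ _)
  -- key midpoint inequality
  have hkey : ∀ n m : ℕ, 1 ≤ n → n ≤ m →
      (‖p n‖ ^ 2 + ‖p m‖ ^ 2) / 2 - ‖p n + p m‖ ^ 2 / 4 ≤ (a n - a m) / 2 := by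
    intro n m hn hnm
    set w : E := (2⁻¹ : ℝ) • (p n + p m) with hwdef
    have hwS : w ∈ S := by
      have h := hSconv (hpS n) (hpS m) (by norm_num : (0:ℝ) ≤ 2⁻¹)
        (by norm_num : (0:ℝ) ≤ 2⁻¹) (by norm_num)
      rw [hwdef, smul_add]; exact h
    have h1 : φ (p m) (x m) ≤ φ w (x m) := hpmin m w hwS
    have h2 : φ (p n) (x m) ≤ a n := hmono (p n) (hpS n) n m hn hnm
    have hJw : (J (x m)) w = 2⁻¹ * ((J (x m)) (p n) + (J (x m)) (p m)) := by
      rw [hwdef, map_smul, map_add, smul_eq_mul]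
    have hwnorm : ‖w‖ ^ 2 = ‖p n + p m‖ ^ 2 / 4 := by
      rw [hwdef, norm_smul]
      simp [norm_inv]
      ring
    have hw : φ w (x m) = ‖p n + p m‖ ^ 2 / 4
        - ((J (x m)) (p n) + (J (x m)) (p m)) + ‖x m‖ ^ 2 := by
      rw [hφ, hJw, hwnorm]; ring
    have hφn : φ (p n) (x m) = ‖p n‖ ^ 2 - 2 * (J (x m)) (p n) + ‖x m‖ ^ 2 := hφ _ _
    have hφm : φ (p m) (x m) = ‖p m‖ ^ 2 - 2 * (J (x m)) (p m) + ‖x m‖ ^ 2 := hφ _ _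
    have ham : a m = φ (p m) (x m) := rfl
    linarith
  rw [Metric.cauchySeq_iff]
  intro ε hε
  obtain ⟨c, hc, hcbd⟩ := uc_sq_aux (E := E) hR1 hε
  set T : Set ℝ := a '' {n : ℕ | 1 ≤ n} with hTdef
  have hTne : T.Nonempty := by
    refine ⟨a 1, ⟨1, ?_, rfl⟩⟩
    simp
  have hTbd : BddBelow T := by
    refine ⟨0, ?_⟩
    rintro y ⟨n, -, rfl⟩
    exact ha0 n
  obtain ⟨y, hyT, hy⟩ := exists_lt_of_csInf_lt hTne (by linarith : sInf T < sInf T + c)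
  obtain ⟨N, hN1, hNa⟩ := hyT
  have hN1' : 1 ≤ N := hN1
  have main : ∀ i j : ℕ, N ≤ i → i ≤ j → ε ≤ ‖p i - p j‖ → False := by
    intro i j hi hij hnorm
    have hi1 : 1 ≤ i := le_trans hN1' hi
    have hj1 : 1 ≤ j := le_trans hi1 hij
    have hbd := hcbd (p i) (p j) (hpR i hi1) (hpR j hj1) hnorm
    have hk := hkey i j hi1 hij
    have h1 : a i ≤ a N := hamono N i hN1' hi
    have h2 : sInf T ≤ a j := by
      refine csInf_le hTbd ⟨j, ?_, rfl⟩
      simpa using hj1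
    have h3 : a N < sInf T + c := by rw [hNa]; exact hy
    linarith
  refine ⟨N, fun m hm n hn => ?_⟩
  by_contra hcon
  push_neg at hcon
  rw [dist_eq_norm] at hcon
  rcases le_total m n with h | h
  · exact main m n hm h hcon
  · exact main n m hn h (by rwa [norm_sub_rev])
end

section
/- Let B = ∂f be the subdifferential of a proper convex lower semicontinuous function f : E → ℝ ∪ {+∞} on a reflexive, strictly convex, smooth Banach space E. Then for r > 0 and z ∈ E, the resolvent J_r^{∂f}(z) = (J + r∂f)⁻¹(Jz) equals argmin_{y ∈ E} { f(y) + (1/(2r))‖y‖² − (1/r)⟨y, Jz⟩ }. -/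
open NormedSpace

private lemma resolvent_aux {A B C : ℝ} (h1 : A ^ 2 + B ^ 2 - 2 * C ≤ 0)
    (h2 : C ≤ B * A) : A = B ∧ C = B ^ 2 := by
  constructor <;> nlinarith [sq_nonneg (A - B)]

/-- For a proper convex lower semicontinuous `f : E → ℝ ∪ {+∞}` on a
reflexive, strictly convex, smooth Banach space, the resolvent `J_r^{∂f}(z)`, i.e. the point
`x_r` with `Jz ∈ Jx_r + r ∂f(x_r)`, equals
`argmin_y { f(y) + (1/(2r))‖y‖² − (1/r)⟨y, Jz⟩ }`. -/
theorem resolvent_subdifferential_eq_argmin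
    {E : Type*} [NormedAddCommGroup E] [NormedSpace ℝ E] [CompleteSpace E]
    [StrictConvexSpace ℝ E]
    (J : E → StrongDual ℝ E)
    (hJ : ∀ u, J u u = ‖u‖ ^ 2) (hJnorm : ∀ u, ‖J u‖ = ‖u‖)
    (f : E → EReal)
    (hproper : (∃ u, f u ≠ ⊤) ∧ ∀ u, f u ≠ ⊥)
    (hfconv : ∀ u v : E, ∀ t : ℝ, 0 ≤ t → t ≤ 1 →
      f (t • u + (1 - t) • v) ≤ (t : EReal) * f u + ((1 - t : ℝ) : EReal) * f v)
    (hflsc : LowerSemicontinuous f)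
    (r : ℝ) (hr : 0 < r) (z xr : E)
    -- `xr` is the resolvent point: `Jz ∈ Jxr + r ∂f(xr)`
    (hxr : ∃ s : StrongDual ℝ E, (∀ v, f xr + ((s (v - xr) : ℝ) : EReal) ≤ f v) ∧
      J z = J xr + r • s) :
    (∀ v : E, f xr + (((1 / (2 * r)) * ‖xr‖ ^ 2 - (1 / r) * J z xr : ℝ) : EReal) ≤
        f v + (((1 / (2 * r)) * ‖v‖ ^ 2 - (1 / r) * J z v : ℝ) : EReal)) ∧
    (∀ w : E, (∀ v : E, f w + (((1 / (2 * r)) * ‖w‖ ^ 2 - (1 / r) * J z w : ℝ) : EReal) ≤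
        f v + (((1 / (2 * r)) * ‖v‖ ^ 2 - (1 / r) * J z v : ℝ) : EReal)) → w = xr) := by
  obtain ⟨s, hs, hJz⟩ := hxr
  obtain ⟨⟨u0, hu0⟩, hbot⟩ := hproper
  -- f xr is a real number
  have hxrtop : f xr ≠ ⊤ := by
    intro h
    have h1 := hs u0
    rw [h, EReal.top_add_coe] at h1
    exact hu0 (top_le_iff.mp h1)
  obtain ⟨a, ha⟩ : ∃ a : ℝ, f xr = (a : EReal) := by
    lift f xr to ℝ using ⟨hxrtop, hbot xr⟩ with a
    exact ⟨a, rfl⟩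
  -- formula for s
  have hsu : ∀ u : E, s u = (J z u - J xr u) / r := by
    intro u
    have h1 : J z u = J xr u + r * s u := by
      rw [hJz]; simp
    field_simp
    linarith
  set c : E → ℝ := fun v => (1 / (2 * r)) * ‖v‖ ^ 2 - (1 / r) * J z v with hc
  -- key identity
  have key : ∀ v : E, c v + s (v - xr) - c xr
      = (1 / (2 * r)) * (‖v‖ ^ 2 + ‖xr‖ ^ 2 - 2 * J xr v) := by
    intro v
    have h1 : s (v - xr) = (J z (v - xr) - J xr (v - xr)) / r := hsu _
    rw [h1, map_sub, map_sub]
    simp only [hc]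
    rw [hJ xr]
    field_simp
    ring
  -- bound on J xr v
  have hbound : ∀ v : E, J xr v ≤ ‖xr‖ * ‖v‖ := by
    intro v
    calc J xr v ≤ ‖J xr v‖ := le_abs_self _
    _ ≤ ‖J xr‖ * ‖v‖ := (J xr).le_opNorm v
    _ = ‖xr‖ * ‖v‖ := by rw [hJnorm]
  have key2 : ∀ v : E, 0 ≤ c v + s (v - xr) - c xr := by
    intro v
    rw [key v]
    have h1 := hbound v
    have h2 : (0:ℝ) ≤ (‖v‖ - ‖xr‖) ^ 2 := sq_nonneg _
    have h3 : (0:ℝ) < 1 / (2 * r) := by positivity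
    nlinarith
  constructor
  · intro v
    by_cases hv : f v = ⊤
    · rw [hv, EReal.top_add_coe]; exact le_top
    · obtain ⟨b, hb⟩ : ∃ b : ℝ, f v = (b : EReal) := by
        lift f v to ℝ using ⟨hv, hbot v⟩ with b
        exact ⟨b, rfl⟩
      have h1 := hs v
      rw [ha, hb, ← EReal.coe_add, EReal.coe_le_coe_iff] at h1
      rw [ha, hb, ← EReal.coe_add, ← EReal.coe_add, EReal.coe_le_coe_iff]
      have h2 := key2 v
      simp only [hc] at h2 ⊢
      linarith
  · intro w hw
    have h1 := hw xr
    have hwtop : f w ≠ ⊤ := by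
      intro h
      rw [h, EReal.top_add_coe, ha, ← EReal.coe_add] at h1
      exact EReal.coe_ne_top _ (top_le_iff.mp h1)
    obtain ⟨b, hb⟩ : ∃ b : ℝ, f w = (b : EReal) := by
      lift f w to ℝ using ⟨hwtop, hbot w⟩ with b
      exact ⟨b, rfl⟩
    rw [ha, hb, ← EReal.coe_add, ← EReal.coe_add, EReal.coe_le_coe_iff] at h1
    have h2 := hs w
    rw [ha, hb, ← EReal.coe_add, EReal.coe_le_coe_iff] at h2
    -- c w + s (w - xr) - c xr ≤ 0
    have h3 : c w + s (w - xr) - c xr ≤ 0 := by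
      simp only [hc] at h1 ⊢
      linarith
    rw [key w] at h3
    have h4 := hbound w
    have h5 : (0:ℝ) < 1 / (2 * r) := by positivity
    have h3' : ‖w‖ ^ 2 + ‖xr‖ ^ 2 - 2 * J xr w ≤ 0 := by
      by_contra hcon
      push_neg at hcon
      nlinarith [mul_pos h5 hcon]
    obtain ⟨hnw, hJw⟩ := resolvent_aux h3' h4
    -- strict convexity
    have hsum : ‖w + xr‖ = ‖w‖ + ‖xr‖ := by
      have h6 : 2 * ‖xr‖ ^ 2 = J xr (w + xr) := by
        rw [map_add, hJ, hJw]; ring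
      have h7 : J xr (w + xr) ≤ ‖xr‖ * ‖w + xr‖ := hbound _
      have h8 : ‖w + xr‖ ≤ ‖w‖ + ‖xr‖ := norm_add_le _ _
      by_cases h0 : xr = 0
      · have hw0 : ‖w‖ = 0 := by rw [hnw, h0, norm_zero]
        rw [h0, add_zero, hw0, norm_zero, add_zero]
      · have hpos : 0 < ‖xr‖ := norm_pos_iff.mpr h0
        have h9 : ‖xr‖ * (2 * ‖xr‖) ≤ ‖xr‖ * ‖w + xr‖ := by
          have he : ‖xr‖ * (2 * ‖xr‖) = 2 * ‖xr‖ ^ 2 := by ring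
          linarith
        have h10 := (mul_le_mul_iff_right₀ hpos).mp h9
        linarith
    exact eq_of_norm_eq_of_norm_add_eq hnw hsum
end
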